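/- Fix A ∈ ℝ and b ∈ ℝ², and for p ∈ ℝ² \ {0} set h(p) = |p| − b·p/|p| − A and w(p) = e^{h(p)} / (1 + e^{h(p)})². Then w is integrable on ℝ², and for every (λ₀, λ₁, λ₂) ∈ ℝ³ with (λ₀, λ₁, λ₂) ≠ 0 one has ∫_{ℝ²} ( λ₀ + λ₁ p₁/|p| + λ₂ p₂/|p| )² w(p) dp > 0; equivalently, the 3×3 matrix with entries H_{ij} = ∫_{ℝ²} m_i(p) m_j(p) w(p) dp, where m(p) = (1, p₁/|p|, p₂/|p|), is symmetric positive definite. -/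

import Mathlib

open MeasureTheory Set

/-- The Euclidean norm on `ℝ²`. -/
noncomputable def nrm (p : ℝ × ℝ) : ℝ := Real.sqrt (p.1 ^ 2 + p.2 ^ 2)

/-- `h(p) = |p| - b·p/|p| - A`. -/
noncomputable def hFun (A : ℝ) (b : ℝ × ℝ) (p : ℝ × ℝ) : ℝ :=
  nrm p - (b.1 * p.1 + b.2 * p.2) / nrm p - A

/-- `w(p) = e^{h(p)} / (1 + e^{h(p)})²`. -/
noncomputable def wFun (A : ℝ) (b : ℝ × ℝ) (p : ℝ × ℝ) : ℝ :=
  Real.exp (hFun A b p) / (1 + Real.exp (hFun A b p)) ^ 2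

/-- `m(p) = (1, p₁/|p|, p₂/|p|)`. -/
noncomputable def mvec : Fin 3 → (ℝ × ℝ) → ℝ :=
  ![fun _ => 1, fun p => p.1 / nrm p, fun p => p.2 / nrm p]

lemma nrm_nonneg (p : ℝ × ℝ) : 0 ≤ nrm p := Real.sqrt_nonneg _

lemma abs_fst_le_nrm (p : ℝ × ℝ) : |p.1| ≤ nrm p := by
  rw [nrm, ← Real.sqrt_sq_eq_abs]
  exact Real.sqrt_le_sqrt (by nlinarith [sq_nonneg p.2])

lemma abs_snd_le_nrm (p : ℝ × ℝ) : |p.2| ≤ nrm p := by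
  rw [nrm, ← Real.sqrt_sq_eq_abs]
  exact Real.sqrt_le_sqrt (by nlinarith [sq_nonneg p.1])

lemma continuous_nrm : Continuous nrm :=
  Real.continuous_sqrt.comp (by fun_prop)

lemma measurable_hFun (A : ℝ) (b : ℝ × ℝ) : Measurable (hFun A b) := by
  unfold hFun
  exact (continuous_nrm.measurable.sub
    (((measurable_fst.const_mul b.1).add (measurable_snd.const_mul b.2)).div
      continuous_nrm.measurable)).sub measurable_const

lemma measurable_wFun (A : ℝ) (b : ℝ × ℝ) : Measurable (wFun A b) := by
  unfold wFun
  exact (Real.measurable_exp.comp (measurable_hFun A b)).div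
    ((measurable_const.add (Real.measurable_exp.comp (measurable_hFun A b))).pow_const 2)

lemma wFun_pos (A : ℝ) (b : ℝ × ℝ) (p : ℝ × ℝ) : 0 < wFun A b p := by
  unfold wFun
  have := Real.exp_pos (hFun A b p)
  positivity

lemma integrable_exp_half_abs : Integrable (fun x : ℝ => Real.exp (-(|x| / 2))) := by
  have h1 : IntegrableOn (fun x : ℝ => Real.exp (-(|x| / 2))) (Ici 0) := by
    rw [integrableOn_Ici_iff_integrableOn_Ioi]
    refine (exp_neg_integrableOn_Ioi 0 (by norm_num : (0:ℝ) < 1/2)).congr_fun ?_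
      measurableSet_Ioi
    intro x hx
    simp only [mem_Ioi] at hx
    show Real.exp (-(1/2) * x) = Real.exp (-(|x| / 2))
    rw [abs_of_pos hx]
    ring_nf
  have h2 : IntegrableOn (fun x : ℝ => Real.exp (-(|x| / 2))) (Iic 0) := by
    have h3 := (MeasurePreserving.integrableOn_comp_preimage
      (Measure.measurePreserving_neg (volume : Measure ℝ))
      (Homeomorph.neg ℝ).measurableEmbedding).2 h1
    have hs : ((Neg.neg : ℝ → ℝ) ⁻¹' Ici (0:ℝ)) = Iic 0 := by
      ext x; simp
    rw [hs] at h3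
    refine h3.congr_fun ?_ measurableSet_Iic
    intro x _
    simp [Function.comp, abs_neg]
  rw [← integrableOn_univ, ← Iic_union_Ici (a := (0:ℝ))]
  exact h2.union h1

lemma integrable_dom :
    Integrable (fun p : ℝ × ℝ => Real.exp (-(|p.1| / 2)) * Real.exp (-(|p.2| / 2))) := by
  have := integrable_exp_half_abs.mul_prod integrable_exp_half_abs
  rwa [← Measure.volume_eq_prod] at this

lemma wFun_le (A : ℝ) (b : ℝ × ℝ) (p : ℝ × ℝ) :
    wFun A b p ≤ Real.exp (A + |b.1| + |b.2|) *
      (Real.exp (-(|p.1| / 2)) * Real.exp (-(|p.2| / 2))) := by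
  have h1 : wFun A b p ≤ Real.exp (-(hFun A b p)) := by
    rw [wFun, Real.exp_neg]
    rw [div_le_iff₀ (by positivity), inv_mul_eq_div, le_div_iff₀ (Real.exp_pos _)]
    nlinarith [Real.exp_pos (hFun A b p)]
  have hd : (b.1 * p.1 + b.2 * p.2) / nrm p ≤ |b.1| + |b.2| := by
    rcases eq_or_lt_of_le (nrm_nonneg p) with h | h
    · rw [← h, div_zero]; positivity
    · rw [div_le_iff₀ h]
      have e1 : b.1 * p.1 ≤ |b.1| * |p.1| := by
        calc b.1 * p.1 ≤ |b.1 * p.1| := le_abs_self _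
          _ = |b.1| * |p.1| := abs_mul _ _
      have e2 : b.2 * p.2 ≤ |b.2| * |p.2| := by
        calc b.2 * p.2 ≤ |b.2 * p.2| := le_abs_self _
          _ = |b.2| * |p.2| := abs_mul _ _
      nlinarith [abs_fst_le_nrm p, abs_snd_le_nrm p, abs_nonneg b.1, abs_nonneg b.2]
  have hn : (|p.1| + |p.2|) / 2 ≤ nrm p := by
    have := abs_fst_le_nrm p; have := abs_snd_le_nrm p; linarith
  have h2 : -(hFun A b p) ≤ A + |b.1| + |b.2| + (-(|p.1| / 2) + -(|p.2| / 2)) := by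
    rw [hFun]; linarith
  calc wFun A b p ≤ Real.exp (-(hFun A b p)) := h1
    _ ≤ Real.exp (A + |b.1| + |b.2| + (-(|p.1| / 2) + -(|p.2| / 2))) := Real.exp_le_exp.2 h2
    _ = _ := by rw [Real.exp_add, Real.exp_add, Real.exp_add, Real.exp_add]

lemma integrable_wFun (A : ℝ) (b : ℝ × ℝ) : Integrable (wFun A b) := by
  refine (integrable_dom.const_mul (Real.exp (A + |b.1| + |b.2|))).mono'
    (measurable_wFun A b).aestronglyMeasurable (ae_of_all _ fun p => ?_)
  rw [Real.norm_eq_abs, abs_of_pos (wFun_pos A b p)]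
  exact wFun_le A b p

lemma integrable_mul_wFun (A : ℝ) (b : ℝ × ℝ) {φ : ℝ × ℝ → ℝ} (hm : Measurable φ)
    {M : ℝ} (hM : ∀ p, |φ p| ≤ M) :
    Integrable (fun p => φ p * wFun A b p) := by
  refine ((integrable_wFun A b).const_mul M).mono'
    ((hm.mul (measurable_wFun A b)).aestronglyMeasurable) (ae_of_all _ fun p => ?_)
  rw [Real.norm_eq_abs, abs_mul, abs_of_pos (wFun_pos A b p)]
  exact mul_le_mul_of_nonneg_right (hM p) (wFun_pos A b p).le

lemma measurable_mvec (i : Fin 3) : Measurable (mvec i) := by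
  fin_cases i
  · exact measurable_const
  · exact measurable_fst.div continuous_nrm.measurable
  · exact measurable_snd.div continuous_nrm.measurable

lemma abs_div_nrm_le (p : ℝ × ℝ) {x : ℝ} (hx : |x| ≤ nrm p) : |x / nrm p| ≤ 1 := by
  rcases eq_or_lt_of_le (nrm_nonneg p) with h | h
  · rw [← h, div_zero, abs_zero]; norm_num
  · rw [abs_div, abs_of_pos h, div_le_one h]; exact hx

lemma abs_mvec_le (i : Fin 3) (p : ℝ × ℝ) : |mvec i p| ≤ 1 := by
  fin_cases i
  · simp [mvec]
  · simpa [mvec] using abs_div_nrm_le p (abs_fst_le_nrm p)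
  · simpa [mvec] using abs_div_nrm_le p (abs_snd_le_nrm p)

lemma eval_mvec0 (p : ℝ × ℝ) : mvec 0 p = 1 := rfl
lemma eval_mvec1 (p : ℝ × ℝ) : mvec 1 p = p.1 / nrm p := rfl
lemma eval_mvec2 (p : ℝ × ℝ) : mvec 2 p = p.2 / nrm p := rfl

lemma integrable_mm (A : ℝ) (b : ℝ × ℝ) (i j : Fin 3) :
    Integrable (fun p : ℝ × ℝ => mvec i p * mvec j p * wFun A b p) := by
  refine integrable_mul_wFun A b ((measurable_mvec i).mul (measurable_mvec j)) (M := 1) ?_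
  intro p
  rw [abs_mul]
  exact mul_le_one₀ (abs_mvec_le i p) (abs_nonneg _) (abs_mvec_le j p)

lemma integrand_pos (A : ℝ) (b : ℝ × ℝ) (l : Fin 3 → ℝ) (hl : l ≠ 0) :
    0 < ∫ p : ℝ × ℝ,
      (l 0 * mvec 0 p + l 1 * mvec 1 p + l 2 * mvec 2 p) ^ 2 * wFun A b p := by
  set f : ℝ × ℝ → ℝ := fun p => l 0 * mvec 0 p + l 1 * mvec 1 p + l 2 * mvec 2 p with hf
  have hfm : Measurable f :=
    (((measurable_mvec 0).const_mul (l 0)).add ((measurable_mvec 1).const_mul (l 1))).add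
      ((measurable_mvec 2).const_mul (l 2))
  set g : ℝ × ℝ → ℝ := fun p => f p ^ 2 * wFun A b p with hg
  have hgnn : 0 ≤ g := fun p => mul_nonneg (sq_nonneg _) (wFun_pos A b p).le
  have hgint : Integrable g := by
    refine integrable_mul_wFun A b (hfm.pow_const 2)
      (M := (|l 0| + |l 1| + |l 2|) ^ 2) fun p => ?_
    have hfb : |f p| ≤ |l 0| + |l 1| + |l 2| := by
      have h0 := abs_mvec_le 0 p
      have h1 := abs_mvec_le 1 p
      have h2 := abs_mvec_le 2 p
      calc |f p| ≤ |l 0 * mvec 0 p| + |l 1 * mvec 1 p| + |l 2 * mvec 2 p| := abs_add_three _ _ _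
        _ = |l 0| * |mvec 0 p| + |l 1| * |mvec 1 p| + |l 2| * |mvec 2 p| := by
            rw [abs_mul, abs_mul, abs_mul]
        _ ≤ |l 0| * 1 + |l 1| * 1 + |l 2| * 1 := by
            gcongr
        _ = |l 0| + |l 1| + |l 2| := by ring
    calc |f p ^ 2| = |f p| ^ 2 := by rw [abs_pow]
      _ ≤ (|l 0| + |l 1| + |l 2|) ^ 2 := pow_le_pow_left₀ (abs_nonneg _) hfb 2
  -- find a point on the unit circle where f is nonzero
  have hone : ∀ x y : ℝ, x ^ 2 + y ^ 2 = 1 → nrm (x, y) = 1 := by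
    intro x y hxy
    simp only [nrm, hxy, Real.sqrt_one]
  have hex : ∃ p₀ : ℝ × ℝ, nrm p₀ = 1 ∧ f p₀ ≠ 0 := by
    by_contra hcon
    push_neg at hcon
    have e1 := hcon (1, 0) (hone 1 0 (by norm_num))
    have e2 := hcon (-1, 0) (hone (-1) 0 (by norm_num))
    have e3 := hcon (0, 1) (hone 0 1 (by norm_num))
    rw [hf] at e1 e2 e3
    simp only [eval_mvec0, eval_mvec1, eval_mvec2, hone 1 0 (by norm_num),
      hone (-1) 0 (by norm_num), hone 0 1 (by norm_num)] at e1 e2 e3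
    norm_num at e1 e2 e3
    apply hl
    funext i
    fin_cases i <;> simp <;> linarith
  obtain ⟨p₀, hp₀n, hp₀f⟩ := hex
  have hfc : ContinuousAt f p₀ := by
    have hn : ContinuousAt nrm p₀ := continuous_nrm.continuousAt
    have hnz : nrm p₀ ≠ 0 := by rw [hp₀n]; norm_num
    have c1 : ContinuousAt (fun p : ℝ × ℝ => mvec 1 p) p₀ := by
      simp only [eval_mvec1]
      exact continuous_fst.continuousAt.div hn hnz
    have c2 : ContinuousAt (fun p : ℝ × ℝ => mvec 2 p) p₀ := by
      simp only [eval_mvec2]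
      exact continuous_snd.continuousAt.div hn hnz
    have c0 : ContinuousAt (fun p : ℝ × ℝ => mvec 0 p) p₀ := continuousAt_const
    exact ((c0.const_mul (l 0)).add (c1.const_mul (l 1))).add (c2.const_mul (l 2))
  have hev : ∀ᶠ p in nhds p₀, f p ≠ 0 := hfc.eventually_ne hp₀f
  obtain ⟨U, hU, hUo, hp₀U⟩ := eventually_nhds_iff.mp hev
  rw [integral_pos_iff_support_of_nonneg hgnn hgint]
  have hUsub : U ⊆ Function.support g := by
    intro p hp
    have : f p ≠ 0 := hU p hp
    simp only [Function.mem_support, hg]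
    exact mul_ne_zero (pow_ne_zero 2 this) (wFun_pos A b p).ne'
  calc (0 : ENNReal) < volume U := hUo.measure_pos volume ⟨p₀, hp₀U⟩
    _ ≤ volume (Function.support g) := measure_mono hUsub

lemma quad_eq (A : ℝ) (b : ℝ × ℝ) (x : Fin 3 → ℝ) :
    (∫ p : ℝ × ℝ, (x 0 * mvec 0 p + x 1 * mvec 1 p + x 2 * mvec 2 p) ^ 2 * wFun A b p)
      = ∑ i : Fin 3, ∑ j : Fin 3,
          x i * x j * ∫ p : ℝ × ℝ, mvec i p * mvec j p * wFun A b p := by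
  have hint : ∀ i j : Fin 3,
      Integrable (fun p : ℝ × ℝ => x i * x j * (mvec i p * mvec j p * wFun A b p)) :=
    fun i j => (integrable_mm A b i j).const_mul _
  calc (∫ p : ℝ × ℝ, (x 0 * mvec 0 p + x 1 * mvec 1 p + x 2 * mvec 2 p) ^ 2 * wFun A b p)
      = ∫ p : ℝ × ℝ, ∑ i : Fin 3, ∑ j : Fin 3,
          x i * x j * (mvec i p * mvec j p * wFun A b p) := by
        congr 1
        funext p
        simp only [Fin.sum_univ_three]
        ring
    _ = ∑ i : Fin 3, ∫ p : ℝ × ℝ, ∑ j : Fin 3,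
          x i * x j * (mvec i p * mvec j p * wFun A b p) :=
        integral_finset_sum _ fun i _ => integrable_finset_sum _ fun j _ => hint i j
    _ = ∑ i : Fin 3, ∑ j : Fin 3, ∫ p : ℝ × ℝ,
          x i * x j * (mvec i p * mvec j p * wFun A b p) :=
        Finset.sum_congr rfl fun i _ => integral_finset_sum _ fun j _ => hint i j
    _ = _ := by
        refine Finset.sum_congr rfl fun i _ => Finset.sum_congr rfl fun j _ => ?_
        exact integral_const_mul _ _

theorem hessian_pos_def (A : ℝ) (b : ℝ × ℝ) :
    Integrable (wFun A b) ∧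
    (∀ l : Fin 3 → ℝ, l ≠ 0 →
      0 < ∫ p : ℝ × ℝ,
        (l 0 * mvec 0 p + l 1 * mvec 1 p + l 2 * mvec 2 p) ^ 2 * wFun A b p) ∧
    (Matrix.of fun i j : Fin 3 => ∫ p : ℝ × ℝ, mvec i p * mvec j p * wFun A b p).PosDef := by
  refine ⟨integrable_wFun A b, fun l hl => integrand_pos A b l hl,
    Matrix.PosDef.of_dotProduct_mulVec_pos ?_ ?_⟩
  · -- IsHermitian
    ext i j
    simp only [Matrix.conjTranspose_apply, Matrix.of_apply, star_trivial]
    congr 1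
    funext p
    ring
  · intro x hx
    have h1 := integrand_pos A b x hx
    rw [quad_eq A b x] at h1
    have key : dotProduct (star x) (Matrix.mulVec (Matrix.of fun i j : Fin 3 =>
        ∫ p : ℝ × ℝ, mvec i p * mvec j p * wFun A b p) x)
        = ∑ i : Fin 3, ∑ j : Fin 3,
            x i * x j * ∫ p : ℝ × ℝ, mvec i p * mvec j p * wFun A b p := by
      simp only [dotProduct, Matrix.mulVec, Pi.star_apply, star_trivial,
        Matrix.of_apply, Finset.mul_sum]
      exact Finset.sum_congr rfl fun i _ => Finset.sum_congr rfl fun j _ => by ring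
    rw [key]
    exact h1
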